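/- For n = 3 homogeneous equilibria and q ≥ 0 frozen/rotating waves, the number of full lap signatures of the form ●(S ⊙ S^rev)● with S a lap list of length q satisfying ℓ₁ = 1, the neighbor jump condition, and the alternate jump condition, equals 1, 1, 2, 3, 6 for q = 0, 1, 2, 3, 4 respectively. -/
import Mathlib

/-- Extension of a lap list by `ℓ₀ := 0`. -/
def lapExt (ℓ : ℕ → ℕ) : ℕ → ℕ := fun j => if j = 0 then 0 else ℓ j

/-- Neighbor jump condition: `|ℓ_{j+1} - ℓ_j| ≤ 1` for `1 ≤ j < s`. -/
def NbrJump (ℓ : ℕ → ℕ) (s : ℕ) : Prop :=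
  ∀ j, 1 ≤ j → j < s → |(ℓ (j + 1) : ℤ) - (ℓ j : ℤ)| ≤ 1

/-- Alternate jump condition for every maximal constant block
`ℓ_{j₀-1} ≠ ℓ_{j₀} = ⋯ = ℓ_{j₁} ≠ ℓ_{j₁+1}` (with `ℓ₀ := 0`). -/
def AltJump (ℓ : ℕ → ℕ) (s : ℕ) : Prop :=
  ∀ j₀ j₁, 1 ≤ j₀ → j₀ ≤ j₁ → j₁ < s →
    lapExt ℓ (j₀ - 1) ≠ ℓ j₀ →
    (∀ j, j₀ ≤ j → j ≤ j₁ → ℓ j = ℓ j₀) →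
    ℓ j₁ ≠ ℓ (j₁ + 1) →
    ((ℓ j₀ : ℤ) - (lapExt ℓ (j₀ - 1) : ℤ)) * ((ℓ (j₁ + 1) : ℤ) - (ℓ j₁ : ℤ)) =
      (-1 : ℤ) ^ (j₁ - j₀)

/-- An admissible central lap list `S` (possibly empty), encoded as a list `L`
with `ℓ_j = L[j-1]`: positive entries, first entry 1 (when nonempty), neighbor
and alternate jump conditions.  It encodes the full lap signature
`●( S ⊙ S^rev )●` with `n = 3` homogeneous equilibria. -/
def CentralLapOK (L : List ℕ) : Prop :=
  (∀ x ∈ L, 0 < x) ∧ (L ≠ [] → L.getD 0 0 = 1) ∧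
  NbrJump (fun j => L.getD (j - 1) 0) L.length ∧
  AltJump (fun j => L.getD (j - 1) 0) L.length

instance (ℓ : ℕ → ℕ) (s : ℕ) : Decidable (NbrJump ℓ s) :=
  decidable_of_iff (∀ j < s, 1 ≤ j → |(ℓ (j + 1) : ℤ) - (ℓ j : ℤ)| ≤ 1)
    ⟨fun h j h1 hj => h j hj h1, fun h j hj h1 => h j h1 hj⟩

instance (ℓ : ℕ → ℕ) (s : ℕ) : Decidable (AltJump ℓ s) :=
  decidable_of_iff (∀ j₁ < s, ∀ j₀ < j₁ + 1,
      (1 ≤ j₀ ∧ lapExt ℓ (j₀ - 1) ≠ ℓ j₀ ∧ (∀ j < j₁ + 1, j₀ ≤ j → ℓ j = ℓ j₀) ∧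
        ℓ j₁ ≠ ℓ (j₁ + 1)) →
      ((ℓ j₀ : ℤ) - (lapExt ℓ (j₀ - 1) : ℤ)) * ((ℓ (j₁ + 1) : ℤ) - (ℓ j₁ : ℤ)) =
        (-1 : ℤ) ^ (j₁ - j₀))
    ⟨fun h j₀ j₁ h1 h01 hs hne hc hne2 =>
      h j₁ hs j₀ (Nat.lt_succ_of_le h01)
        ⟨h1, hne, fun j hj hj' => hc j hj' (Nat.lt_succ_iff.mp hj), hne2⟩,
     fun h j₁ hs j₀ h01 ⟨h1, hne, hc, hne2⟩ =>
      h j₀ j₁ h1 (Nat.lt_succ_iff.mp h01) hs hne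
        (fun j hj hj' => hc j (Nat.lt_succ_of_le hj') hj) hne2⟩

instance : DecidablePred CentralLapOK := fun L => by
  unfold CentralLapOK; infer_instance

lemma clok_head {a : ℕ} {t : List ℕ} (h : CentralLapOK (a :: t)) : a = 1 := by
  simpa using h.2.1 (by simp)

lemma clok_step {L : List ℕ} (h : CentralLapOK L) {j : ℕ} (h1 : 1 ≤ j)
    (hj : j < L.length) : L.getD j 0 ≤ L.getD (j - 1) 0 + 1 := by
  have := h.2.2.1 j h1 hj
  simp only [] at this
  have hj' : (j + 1) - 1 = j := by omega
  rw [hj', abs_le] at this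
  omega

theorem stmt13 :
    {L : List ℕ | L.length = 0 ∧ CentralLapOK L}.ncard = 1 ∧
    {L : List ℕ | L.length = 1 ∧ CentralLapOK L}.ncard = 1 ∧
    {L : List ℕ | L.length = 2 ∧ CentralLapOK L}.ncard = 2 ∧
    {L : List ℕ | L.length = 3 ∧ CentralLapOK L}.ncard = 3 ∧
    {L : List ℕ | L.length = 4 ∧ CentralLapOK L}.ncard = 6 := by
  have h0 : {L : List ℕ | L.length = 0 ∧ CentralLapOK L} =
      ↑({[]} : Finset (List ℕ)) := by
    ext L
    simp only [Set.mem_setOf_eq, Finset.coe_singleton, Set.mem_singleton_iff,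
      List.length_eq_zero_iff]
    constructor
    · rintro ⟨h, -⟩; exact h
    · rintro rfl; exact ⟨rfl, by decide⟩
  have h1 : {L : List ℕ | L.length = 1 ∧ CentralLapOK L} =
      ↑({[1]} : Finset (List ℕ)) := by
    ext L
    simp only [Set.mem_setOf_eq, Finset.coe_singleton, Set.mem_singleton_iff]
    constructor
    · rintro ⟨hlen, hok⟩
      match L, hlen with
      | [a], _ =>
        have ha := clok_head hok
        subst ha; rfl
    · rintro rfl; exact ⟨rfl, by decide⟩
  have h2 : {L : List ℕ | L.length = 2 ∧ CentralLapOK L} =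
      ↑({[1,1],[1,2]} : Finset (List ℕ)) := by
    ext L
    simp only [Set.mem_setOf_eq, Finset.coe_insert, Set.mem_insert_iff,
      Finset.coe_singleton, Set.mem_singleton_iff]
    constructor
    · rintro ⟨hlen, hok⟩
      match L, hlen with
      | [a, b], _ =>
        have ha := clok_head hok
        subst ha
        have hb1 : 0 < b := hok.1 b (by simp)
        have hb2 : b ≤ 2 := by
          have := clok_step hok (j := 1) le_rfl (by simp)
          simpa using this
        interval_cases b <;> revert hok <;> decide
    · rintro (rfl | rfl) <;> exact ⟨rfl, by decide⟩
  have h3 : {L : List ℕ | L.length = 3 ∧ CentralLapOK L} =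
      ↑({[1,1,1],[1,2,2],[1,2,3]} : Finset (List ℕ)) := by
    ext L
    simp only [Set.mem_setOf_eq, Finset.coe_insert, Set.mem_insert_iff,
      Finset.coe_singleton, Set.mem_singleton_iff]
    constructor
    · rintro ⟨hlen, hok⟩
      match L, hlen with
      | [a, b, c], _ =>
        have ha := clok_head hok
        subst ha
        have hb1 : 0 < b := hok.1 b (by simp)
        have hc1 : 0 < c := hok.1 c (by simp)
        have hb2 : b ≤ 2 := by
          have := clok_step hok (j := 1) le_rfl (by simp); simpa using this
        have hc2 : c ≤ b + 1 := by
          have := clok_step hok (j := 2) (by norm_num) (by simp); simpa using this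
        interval_cases b <;> interval_cases c <;> revert hok <;> decide
    · rintro (rfl | rfl | rfl) <;> exact ⟨rfl, by decide⟩
  have h4 : {L : List ℕ | L.length = 4 ∧ CentralLapOK L} =
      ↑({[1,1,1,1],[1,1,1,2],[1,2,2,1],[1,2,2,2],[1,2,3,3],[1,2,3,4]} :
        Finset (List ℕ)) := by
    ext L
    simp only [Set.mem_setOf_eq, Finset.coe_insert, Set.mem_insert_iff,
      Finset.coe_singleton, Set.mem_singleton_iff]
    constructor
    · rintro ⟨hlen, hok⟩
      match L, hlen with
      | [a, b, c, d], _ =>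
        have ha := clok_head hok
        subst ha
        have hb1 : 0 < b := hok.1 b (by simp)
        have hc1 : 0 < c := hok.1 c (by simp)
        have hd1 : 0 < d := hok.1 d (by simp)
        have hb2 : b ≤ 2 := by
          have := clok_step hok (j := 1) le_rfl (by simp); simpa using this
        have hc2 : c ≤ b + 1 := by
          have := clok_step hok (j := 2) (by norm_num) (by simp); simpa using this
        have hd2 : d ≤ c + 1 := by
          have := clok_step hok (j := 3) (by norm_num) (by simp); simpa using this
        interval_cases b <;> interval_cases c <;> interval_cases d <;>
          revert hok <;> decide
    · rintro (rfl | rfl | rfl | rfl | rfl | rfl) <;> exact ⟨rfl, by decide⟩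
  refine ⟨?_, ?_, ?_, ?_, ?_⟩ <;>
    [rw [h0]; rw [h1]; rw [h2]; rw [h3]; rw [h4]] <;>
    rw [Set.ncard_coe_finset] <;> decide
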